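/- arXiv:2106.13185 — 3 statements merged into one kernel-verified Lean document; each statement's English description precedes it below -/
import Mathlib

section
/- Let $k_F > 0$ and $B_F = \{k \in \mathbb{Z}^3 : |k| \leq k_F\}$ be the Fermi ball, with $N = |B_F|$. Then there exists a constant $C > 0$ (independent of $k_F$ and $q$) such that for every $q \in \mathbb{Z}^3$, the number of lattice points in $B_F$ whose translate by $-q$ lies outside $B_F$ satisfies $|B_F \cap (B_F^c + q)| \leq C |q| N^{2/3}$. -/
open MeasureTheory ENNReal

/-- Euclidean norm of a lattice point in ℤ³. -/
noncomputable def latNorm (q : Fin 3 → ℤ) : ℝ := Real.sqrt (∑ i, ((q i : ℝ))^2)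

noncomputable def ιV (k : Fin 3 → ℤ) : EuclideanSpace ℝ (Fin 3) := WithLp.toLp 2 (fun i => (k i : ℝ))

lemma latNorm_eq (k : Fin 3 → ℤ) : latNorm k = ‖ιV k‖ := by
  rw [EuclideanSpace.norm_eq, latNorm]
  congr 1
  refine Finset.sum_congr rfl fun i _ => ?_
  rw [Real.norm_eq_abs, sq_abs]; rfl

lemma ιV_sub (k q : Fin 3 → ℤ) : ιV (k - q) = ιV k - ιV q := by
  ext i
  show ((k i - q i : ℤ) : ℝ) = (k i : ℝ) - (q i : ℝ)
  push_cast; ring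

lemma latNorm_zero : latNorm 0 = 0 := by
  simp [latNorm]

lemma latNorm_nonneg (k : Fin 3 → ℤ) : 0 ≤ latNorm k := Real.sqrt_nonneg _

lemma one_le_latNorm {q : Fin 3 → ℤ} (hq : q ≠ 0) : 1 ≤ latNorm q := by
  obtain ⟨i, hi⟩ : ∃ i, q i ≠ 0 := by
    by_contra h
    push_neg at h
    exact hq (funext h)
  have h1 : (1:ℤ) ≤ (q i)^2 := by
    have := Int.one_le_abs (by omega : q i ≠ 0)
    nlinarith [sq_abs (q i)]
  have h2 : (1:ℝ) ≤ ∑ j, ((q j : ℝ))^2 := by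
    have : (1:ℝ) ≤ ((q i : ℝ))^2 := by exact_mod_cast h1
    calc (1:ℝ) ≤ ((q i : ℝ))^2 := this
      _ ≤ ∑ j, ((q j : ℝ))^2 :=
        Finset.single_le_sum (fun j _ => sq_nonneg ((q j : ℝ))) (Finset.mem_univ i)
  calc (1:ℝ) = Real.sqrt 1 := Real.sqrt_one.symm
    _ ≤ latNorm q := Real.sqrt_le_sqrt h2

def cube (k : Fin 3 → ℤ) : Set (EuclideanSpace ℝ (Fin 3)) :=
  {x | ∀ i, (k i : ℝ) ≤ x i ∧ x i < k i + 1}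

lemma cube_eq (k : Fin 3 → ℤ) : cube k =
    (MeasurableEquiv.toLp 2 (Fin 3 → ℝ)).symm ⁻¹'
      (Set.pi Set.univ fun i => Set.Ico (k i : ℝ) (k i + 1)) := by
  ext x; simp [cube, Set.mem_pi, Set.mem_Ico]

lemma measurable_box (k : Fin 3 → ℤ) :
    MeasurableSet (Set.pi Set.univ fun i => Set.Ico (k i : ℝ) (k i + 1)) :=
  MeasurableSet.univ_pi fun _ => measurableSet_Ico

lemma measurable_cube (k : Fin 3 → ℤ) : MeasurableSet (cube k) := by
  rw [cube_eq]
  exact (MeasurableEquiv.toLp 2 (Fin 3 → ℝ)).symm.measurable (measurable_box k)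

lemma volume_cube (k : Fin 3 → ℤ) : volume (cube k) = 1 := by
  rw [cube_eq,
    (EuclideanSpace.volume_preserving_symm_measurableEquiv_toLp (Fin 3)).measure_preimage
      (measurable_box k).nullMeasurableSet]
  rw [volume_pi_pi]
  simp [Real.volume_Ico]

lemma cube_disjoint {k k' : Fin 3 → ℤ} (h : k ≠ k') : Disjoint (cube k) (cube k') := by
  rw [Set.disjoint_left]
  rintro x hx hx'
  apply h
  funext i
  have h1 := hx i; have h2 := hx' i
  have e1 : (⌊x i⌋ : ℤ) = k i := by
    rw [Int.floor_eq_iff]; constructor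
    · exact h1.1
    · push_cast; exact h1.2
  have e2 : (⌊x i⌋ : ℤ) = k' i := by
    rw [Int.floor_eq_iff]; constructor
    · exact h2.1
    · push_cast; exact h2.2
  omega

lemma mem_cube_floor (x : EuclideanSpace ℝ (Fin 3)) : x ∈ cube (fun i => ⌊x i⌋) := by
  intro i
  refine ⟨Int.floor_le _, ?_⟩
  push_cast
  exact Int.lt_floor_add_one _

lemma dist_cube {k : Fin 3 → ℤ} {x : EuclideanSpace ℝ (Fin 3)} (hx : x ∈ cube k) :
    ‖x - ιV k‖ ≤ Real.sqrt 3 := by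
  rw [EuclideanSpace.norm_eq]
  apply Real.sqrt_le_sqrt
  have key : ∀ i, ‖(x - ιV k) i‖ ^ 2 ≤ 1 := by
    intro i
    have h := hx i
    have e : (x - ιV k) i = x i - (k i : ℝ) := by simp [ιV]
    rw [e, Real.norm_eq_abs, sq_abs]
    nlinarith [h.1, h.2]
  calc ∑ i, ‖(x - ιV k) i‖ ^ 2 ≤ ∑ _i : Fin 3, (1:ℝ) := Finset.sum_le_sum fun i _ => key i
    _ = 3 := by simp

lemma count_le {S : Set (Fin 3 → ℤ)} (hS : S.Finite) {A : Set (EuclideanSpace ℝ (Fin 3))}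
    (hA : ∀ k ∈ S, cube k ⊆ A) : (S.ncard : ℝ≥0∞) ≤ volume A := by
  have h1 : (⋃ k ∈ hS.toFinset, cube k) ⊆ A := by
    simp only [Set.iUnion_subset_iff]
    intro k hk
    exact hA k (hS.mem_toFinset.mp hk)
  have h2 : volume (⋃ k ∈ hS.toFinset, cube k) = ∑ k ∈ hS.toFinset, volume (cube k) := by
    apply measure_biUnion_finset
    · intro k _ k' _ hkk'
      exact cube_disjoint hkk'
    · intro k _
      exact measurable_cube k
  calc (S.ncard : ℝ≥0∞) = ∑ k ∈ hS.toFinset, volume (cube k) := by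
        simp [volume_cube, Set.ncard_eq_toFinset_card S hS]
    _ = _ := h2.symm
    _ ≤ volume A := measure_mono h1

lemma count_ge {S : Set (Fin 3 → ℤ)} (hS : S.Finite) {A : Set (EuclideanSpace ℝ (Fin 3))}
    (hA : A ⊆ ⋃ k ∈ S, cube k) : volume A ≤ (S.ncard : ℝ≥0∞) := by
  have h1 : A ⊆ ⋃ k ∈ hS.toFinset, cube k := by
    intro x hx
    obtain ⟨k, hk, hxk⟩ := Set.mem_iUnion₂.mp (hA hx)
    exact Set.mem_iUnion₂.mpr ⟨k, hS.mem_toFinset.mpr hk, hxk⟩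
  calc volume A ≤ volume (⋃ k ∈ hS.toFinset, cube k) := measure_mono h1
    _ ≤ ∑ k ∈ hS.toFinset, volume (cube k) := measure_biUnion_finset_le _ _
    _ = S.ncard := by simp [volume_cube, Set.ncard_eq_toFinset_card S hS]

noncomputable def cV : ℝ := Real.sqrt Real.pi ^ 3 / Real.Gamma (3 / 2 + 1)

lemma cV_pos : 0 < cV := by
  apply div_pos
  · positivity
  · exact Real.Gamma_pos_of_pos (by norm_num)

lemma toReal_vol_ball (a : ℝ) :
    (volume (Metric.ball (0 : EuclideanSpace ℝ (Fin 3)) a)).toReal = cV * (max a 0)^3 := by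
  rw [EuclideanSpace.volume_ball]
  simp only [Fintype.card_fin]
  rw [ENNReal.toReal_mul, ENNReal.toReal_pow, ENNReal.toReal_ofReal', ENNReal.toReal_ofReal']
  have h : max (Real.sqrt Real.pi ^ 3 / Real.Gamma (↑(3:ℕ) / 2 + 1)) 0
      = Real.sqrt Real.pi ^ 3 / Real.Gamma (↑(3:ℕ) / 2 + 1) := by
    apply max_eq_left
    exact le_of_lt (div_pos (by positivity) (Real.Gamma_pos_of_pos (by norm_num)))
  rw [h, cV]
  push_cast
  ring

lemma toReal_vol_closedBall (b : ℝ) (hb : 0 ≤ b) :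
    (volume (Metric.closedBall (0 : EuclideanSpace ℝ (Fin 3)) b)).toReal = cV * b^3 := by
  rw [EuclideanSpace.volume_closedBall]
  simp only [Fintype.card_fin]
  rw [ENNReal.toReal_mul, ENNReal.toReal_pow, ENNReal.toReal_ofReal hb, ENNReal.toReal_ofReal']
  have h : max (Real.sqrt Real.pi ^ 3 / Real.Gamma (↑(3:ℕ) / 2 + 1)) 0
      = Real.sqrt Real.pi ^ 3 / Real.Gamma (↑(3:ℕ) / 2 + 1) := by
    apply max_eq_left
    exact le_of_lt (div_pos (by positivity) (Real.Gamma_pos_of_pos (by norm_num)))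
  rw [h, cV]
  push_cast
  ring

lemma vol_closedBall_ne_top (b : ℝ) :
    volume (Metric.closedBall (0 : EuclideanSpace ℝ (Fin 3)) b) ≠ ⊤ := by
  rw [EuclideanSpace.volume_closedBall]
  exact ENNReal.mul_ne_top (by simp [pow_ne_top]) ofReal_ne_top

lemma finite_ball (R : ℝ) : {k : Fin 3 → ℤ | latNorm k ≤ R}.Finite := by
  apply Set.Finite.subset (Set.Finite.pi fun i : Fin 3 => Set.finite_Icc (-⌈R⌉) ⌈R⌉)
  intro k hk
  simp only [Set.mem_setOf_eq] at hk
  have hR : 0 ≤ R := le_trans (Real.sqrt_nonneg _) hk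
  have hsum : ∑ i, ((k i : ℝ))^2 ≤ R^2 := by
    have h0 : (0:ℝ) ≤ ∑ i, ((k i : ℝ))^2 := Finset.sum_nonneg fun i _ => sq_nonneg _
    have h1 := Real.sq_sqrt h0
    have h2 : Real.sqrt (∑ i, ((k i : ℝ))^2) ≤ R := hk
    nlinarith [Real.sqrt_nonneg (∑ i, ((k i : ℝ))^2)]
  intro i _
  have h1 : ((k i : ℝ))^2 ≤ R^2 := by
    calc ((k i : ℝ))^2 ≤ ∑ j, ((k j : ℝ))^2 :=
          Finset.single_le_sum (fun j _ => sq_nonneg ((k j : ℝ))) (Finset.mem_univ i)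
      _ ≤ R^2 := hsum
  have h2 := abs_le_of_sq_le_sq' h1 hR
  constructor
  · have hle : -(⌈R⌉ : ℝ) ≤ (k i : ℝ) := le_trans (neg_le_neg (Int.le_ceil R)) h2.1
    exact_mod_cast hle
  · have hle : (k i : ℝ) ≤ (⌈R⌉ : ℝ) := le_trans h2.2 (Int.le_ceil R)
    exact_mod_cast hle

noncomputable def K1 : ℝ := 3 * cV * (1 + 2 * Real.sqrt 3)
noncomputable def K2 : ℝ := 9 / cV ^ ((2:ℝ)/3) + 27

lemma hcV23 : (0:ℝ) < cV ^ ((2:ℝ)/3) := Real.rpow_pos_of_pos cV_pos _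

lemma K1_pos : 0 < K1 := by
  have hs3 : (0:ℝ) < Real.sqrt 3 := Real.sqrt_pos.mpr (by norm_num)
  apply mul_pos (mul_pos (by norm_num) cV_pos)
  nlinarith

lemma K2_pos : 0 < K2 := by
  have h9 : (0:ℝ) < 9 / cV ^ ((2:ℝ)/3) := div_pos (by norm_num) hcV23
  rw [K2]; linarith

lemma main_aux (kF : ℝ) (hkF : 0 < kF) (q : Fin 3 → ℤ) (hq : q ≠ 0) :
    ((Set.ncard {k : Fin 3 → ℤ | latNorm k ≤ kF ∧ ¬ latNorm (k - q) ≤ kF} : ℝ))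
      ≤ K1 * K2 * latNorm q *
        ((Set.ncard {k : Fin 3 → ℤ | latNorm k ≤ kF} : ℝ)) ^ ((2:ℝ)/3) := by
  classical
  have hs3 : (0:ℝ) < Real.sqrt 3 := Real.sqrt_pos.mpr (by norm_num)
  obtain ⟨S, hSdef⟩ : ∃ S : Set (Fin 3 → ℤ),
      S = {k | latNorm k ≤ kF ∧ ¬ latNorm (k - q) ≤ kF} := ⟨_, rfl⟩
  obtain ⟨BF, hBFdef⟩ : ∃ BF : Set (Fin 3 → ℤ), BF = {k | latNorm k ≤ kF} := ⟨_, rfl⟩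
  rw [← hSdef, ← hBFdef]
  have hBFfin : BF.Finite := hBFdef ▸ finite_ball kF
  have hSfin : S.Finite := by
    apply hBFfin.subset
    rw [hSdef, hBFdef]
    exact fun k hk => hk.1
  obtain ⟨Q, hQdef⟩ : ∃ Q : ℝ, Q = latNorm q := ⟨_, rfl⟩
  rw [← hQdef]
  have hQ1 : 1 ≤ Q := hQdef ▸ one_le_latNorm hq
  obtain ⟨b, hb⟩ : ∃ b : ℝ, b = kF + Real.sqrt 3 := ⟨_, rfl⟩
  obtain ⟨a, ha⟩ : ∃ a : ℝ, a = kF - Q - Real.sqrt 3 := ⟨_, rfl⟩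
  have hb0 : 0 ≤ b := by rw [hb]; positivity
  have hab : a ≤ b := by rw [ha, hb]; linarith
  -- step 1 : cubes of S lie in the annulus
  have hcubeS : ∀ k ∈ S, cube k ⊆
      Metric.closedBall (0 : EuclideanSpace ℝ (Fin 3)) b \ Metric.ball 0 a := by
    intro k hk x hx
    rw [hSdef] at hk
    obtain ⟨hk1, hk2⟩ := hk
    rw [latNorm_eq] at hk1
    rw [not_le, latNorm_eq, ιV_sub] at hk2
    have hd : ‖x - ιV k‖ ≤ Real.sqrt 3 := dist_cube hx
    have t1 : ‖ιV k - ιV q‖ ≤ ‖ιV k‖ + ‖ιV q‖ := norm_sub_le _ _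
    have t2 : ‖ιV k‖ ≤ ‖x‖ + ‖x - ιV k‖ := by
      calc ‖ιV k‖ = ‖x - (x - ιV k)‖ := by rw [_root_.sub_sub_cancel]
        _ ≤ ‖x‖ + ‖x - ιV k‖ := norm_sub_le _ _
    have t3 : ‖x‖ ≤ ‖x - ιV k‖ + ‖ιV k‖ := by
      calc ‖x‖ = ‖(x - ιV k) + ιV k‖ := by rw [sub_add_cancel]
        _ ≤ ‖x - ιV k‖ + ‖ιV k‖ := norm_add_le _ _
    have hQn : ‖ιV q‖ = Q := by rw [hQdef, latNorm_eq]
    constructor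
    · simp only [Metric.mem_closedBall, dist_zero_right]
      rw [hb]; linarith
    · simp only [Metric.mem_ball, dist_zero_right, not_lt]
      rw [hQn] at t1
      rw [ha]; linarith
  -- step 1' : count S against annulus volume
  have hstep1 : (S.ncard : ℝ) + cV * (max a 0)^3 ≤ cV * b^3 := by
    have hsub : Metric.ball (0 : EuclideanSpace ℝ (Fin 3)) a ⊆ Metric.closedBall 0 b :=
      le_trans Metric.ball_subset_closedBall (Metric.closedBall_subset_closedBall hab)
    have hcount : (S.ncard : ℝ≥0∞) ≤
        volume (Metric.closedBall (0 : EuclideanSpace ℝ (Fin 3)) b \ Metric.ball 0 a) :=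
      count_le hSfin hcubeS
    have hvol : volume (Metric.closedBall (0 : EuclideanSpace ℝ (Fin 3)) b \ Metric.ball 0 a)
        + volume (Metric.ball (0 : EuclideanSpace ℝ (Fin 3)) a)
        = volume (Metric.closedBall (0 : EuclideanSpace ℝ (Fin 3)) b) := by
      rw [← measure_union disjoint_sdiff_self_left measurableSet_ball,
        Set.diff_union_of_subset hsub]
    have hEN : (S.ncard : ℝ≥0∞) + volume (Metric.ball (0 : EuclideanSpace ℝ (Fin 3)) a)
        ≤ volume (Metric.closedBall (0 : EuclideanSpace ℝ (Fin 3)) b) := by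
      rw [← hvol]
      exact add_le_add_left hcount _
    have hballne : volume (Metric.ball (0 : EuclideanSpace ℝ (Fin 3)) a) ≠ ⊤ :=
      ne_top_of_le_ne_top (vol_closedBall_ne_top b) (measure_mono hsub)
    have hfin := ENNReal.toReal_mono (vol_closedBall_ne_top b) hEN
    rw [ENNReal.toReal_add (by simp) hballne,
      toReal_vol_ball, toReal_vol_closedBall b hb0] at hfin
    simpa using hfin
  -- step 2 : (S.ncard) ≤ K1 * Q * b^2
  have hstep2 : (S.ncard : ℝ) ≤ K1 * Q * b^2 := by
    obtain ⟨a', ha'⟩ : ∃ a' : ℝ, a' = max a 0 := ⟨_, rfl⟩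
    rw [← ha'] at hstep1
    have ha'0 : 0 ≤ a' := ha' ▸ le_max_right _ _
    have ha'a : a ≤ a' := ha' ▸ le_max_left _ _
    have ha'b : a' ≤ b := ha' ▸ max_le hab hb0
    have hba' : b - a' ≤ Q + 2 * Real.sqrt 3 := by
      have hba : b - a = Q + 2 * Real.sqrt 3 := by rw [hb, ha]; ring
      linarith
    have key : (0:ℝ) ≤ (b - a')^2 * (2*b + a') :=
      mul_nonneg (sq_nonneg _) (by linarith)
    have hfac : b^3 - a'^3 ≤ 3 * b^2 * (b - a') := by nlinarith [key]
    have hb2 : (0:ℝ) ≤ b^2 := sq_nonneg b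
    have h1 : (S.ncard : ℝ) ≤ cV * (b^3 - a'^3) := by
      have : cV * (b^3 - a'^3) = cV * b^3 - cV * a'^3 := by ring
      linarith
    have hmid : b^3 - a'^3 ≤ 3 * b^2 * (Q + 2*Real.sqrt 3) := by
      have hmul : 3 * b^2 * (b - a') ≤ 3 * b^2 * (Q + 2*Real.sqrt 3) :=
        mul_le_mul_of_nonneg_left hba' (by positivity)
      linarith
    have h2 : cV * (b^3 - a'^3) ≤ cV * (3 * b^2 * (Q + 2*Real.sqrt 3)) :=
      mul_le_mul_of_nonneg_left hmid (le_of_lt cV_pos)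
    have h3 : Q + 2*Real.sqrt 3 ≤ (1 + 2*Real.sqrt 3) * Q := by
      have := mul_nonneg (by linarith : (0:ℝ) ≤ 2*Real.sqrt 3) (by linarith : (0:ℝ) ≤ Q - 1)
      nlinarith
    calc (S.ncard : ℝ) ≤ cV * (3 * b^2 * (Q + 2*Real.sqrt 3)) := le_trans h1 h2
      _ ≤ cV * (3 * b^2 * ((1 + 2*Real.sqrt 3) * Q)) := by
          apply mul_le_mul_of_nonneg_left _ (le_of_lt cV_pos)
          exact mul_le_mul_of_nonneg_left h3 (by positivity)
      _ = K1 * Q * b^2 := by rw [K1]; ring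
  -- N ≥ 1
  have hN1 : 1 ≤ BF.ncard := by
    rw [Nat.one_le_iff_ne_zero, ← Nat.pos_iff_ne_zero, Set.ncard_pos hBFfin, hBFdef]
    exact ⟨0, by simp [latNorm_zero, le_of_lt hkF]⟩
  have hN1R : (1:ℝ) ≤ (BF.ncard : ℝ) := by exact_mod_cast hN1
  have hNpow1 : (1:ℝ) ≤ (BF.ncard : ℝ) ^ ((2:ℝ)/3) := by
    calc (1:ℝ) = (1:ℝ) ^ ((2:ℝ)/3) := (Real.one_rpow _).symm
      _ ≤ (BF.ncard : ℝ) ^ ((2:ℝ)/3) := Real.rpow_le_rpow (by norm_num) hN1R (by norm_num)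
  have hNpow0 : (0:ℝ) ≤ (BF.ncard : ℝ) ^ ((2:ℝ)/3) := by linarith
  -- step 3 : b^2 ≤ K2 * N^(2/3)
  have hstep3 : b^2 ≤ K2 * (BF.ncard : ℝ) ^ ((2:ℝ)/3) := by
    have h9 : (0:ℝ) < 9 / cV ^ ((2:ℝ)/3) := div_pos (by norm_num) hcV23
    by_cases hcase : kF < 2 * Real.sqrt 3
    · have h3 : Real.sqrt 3 ^ 2 = 3 := Real.sq_sqrt (by norm_num)
      have hbb : b ≤ 3 * Real.sqrt 3 := by rw [hb]; linarith
      have hb27 : b^2 ≤ 27 := by nlinarith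
      have h27 : (27:ℝ) ≤ K2 := by rw [K2]; linarith
      calc b^2 ≤ 27 := hb27
        _ ≤ 27 * ((BF.ncard : ℝ) ^ ((2:ℝ)/3)) := by linarith
        _ ≤ K2 * (BF.ncard : ℝ) ^ ((2:ℝ)/3) :=
            mul_le_mul_of_nonneg_right h27 hNpow0
    · push_neg at hcase
      obtain ⟨r, hr⟩ : ∃ r : ℝ, r = kF - Real.sqrt 3 := ⟨_, rfl⟩
      have hr0 : 0 ≤ r := by rw [hr]; linarith
      have hcover : Metric.closedBall (0 : EuclideanSpace ℝ (Fin 3)) r ⊆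
          ⋃ k ∈ BF, cube k := by
        intro x hx
        simp only [Metric.mem_closedBall, dist_zero_right] at hx
        refine Set.mem_iUnion₂.mpr ⟨fun i => ⌊x i⌋, ?_, mem_cube_floor x⟩
        have hd : ‖x - ιV (fun i => ⌊x i⌋)‖ ≤ Real.sqrt 3 := dist_cube (mem_cube_floor x)
        have t2 : ‖ιV (fun i => ⌊x i⌋)‖ ≤ ‖x‖ + ‖x - ιV (fun i => ⌊x i⌋)‖ := by
          calc ‖ιV (fun i => ⌊x i⌋)‖ = ‖x - (x - ιV (fun i => ⌊x i⌋))‖ := by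
                rw [_root_.sub_sub_cancel]
            _ ≤ _ := norm_sub_le _ _
        rw [hBFdef]
        show latNorm _ ≤ kF
        rw [latNorm_eq]
        rw [hr] at hx
        linarith
      have hcnt := count_ge hBFfin hcover
      have hcntR : cV * r^3 ≤ (BF.ncard : ℝ) := by
        have hmono := ENNReal.toReal_mono (by simp) hcnt
        rw [toReal_vol_closedBall r hr0] at hmono
        simpa using hmono
      have hrpow : (cV * r^3) ^ ((2:ℝ)/3) ≤ (BF.ncard : ℝ) ^ ((2:ℝ)/3) :=
        Real.rpow_le_rpow (mul_nonneg (le_of_lt cV_pos) (by positivity)) hcntR (by norm_num)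
      have hsplit : (cV * r^3) ^ ((2:ℝ)/3) = cV ^ ((2:ℝ)/3) * r^2 := by
        rw [Real.mul_rpow (le_of_lt cV_pos) (by positivity)]
        congr 1
        rw [← Real.rpow_natCast r 3, ← Real.rpow_mul hr0, ← Real.rpow_natCast r 2]
        norm_num
      have hb3r : b ≤ 3 * r := by rw [hb, hr]; linarith
      have hb2 : b^2 ≤ 9 * r^2 := by nlinarith
      calc b^2 ≤ 9 * r^2 := hb2
        _ = (9 / cV ^ ((2:ℝ)/3)) * (cV ^ ((2:ℝ)/3) * r^2) := by
            rw [← mul_assoc, div_mul_cancel₀ (9:ℝ) (ne_of_gt hcV23)]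
        _ ≤ (9 / cV ^ ((2:ℝ)/3)) * ((BF.ncard : ℝ) ^ ((2:ℝ)/3)) := by
            rw [← hsplit]
            exact mul_le_mul_of_nonneg_left hrpow (le_of_lt h9)
        _ ≤ K2 * (BF.ncard : ℝ) ^ ((2:ℝ)/3) := by
            apply mul_le_mul_of_nonneg_right _ hNpow0
            rw [K2]; linarith
  -- combine
  have hQ0 : 0 ≤ Q := le_trans zero_le_one hQ1
  calc (S.ncard : ℝ) ≤ K1 * Q * b^2 := hstep2
    _ ≤ K1 * Q * (K2 * (BF.ncard : ℝ) ^ ((2:ℝ)/3)) := by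
        apply mul_le_mul_of_nonneg_left hstep3
        exact mul_nonneg (le_of_lt K1_pos) hQ0
    _ = K1 * K2 * Q * (BF.ncard : ℝ) ^ ((2:ℝ)/3) := by ring

/-- `|B_F ∩ (B_F^c + q)| ≤ C |q| N^{2/3}` uniformly in `k_F` and `q`. -/
theorem stmt1 :
    ∃ C > 0, ∀ kF : ℝ, 0 < kF → ∀ q : Fin 3 → ℤ,
      ((Set.ncard {k : Fin 3 → ℤ | latNorm k ≤ kF ∧ ¬ latNorm (k - q) ≤ kF} : ℝ))
        ≤ C * latNorm q *
          ((Set.ncard {k : Fin 3 → ℤ | latNorm k ≤ kF} : ℝ)) ^ ((2:ℝ)/3) := by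
  refine ⟨K1 * K2, mul_pos K1_pos K2_pos, ?_⟩
  intro kF hkF q
  by_cases hq : q = 0
  · subst hq
    have hempty : {k : Fin 3 → ℤ | latNorm k ≤ kF ∧ ¬ latNorm (k - 0) ≤ kF} = ∅ := by
      ext k
      simp only [Set.mem_setOf_eq, sub_zero, Set.mem_empty_iff_false, iff_false]
      tauto
    rw [hempty, latNorm_zero]
    simp
  · exact main_aux kF hkF q hq
end

section
/- Suppose for each $k \in \mathbb{Z}^3$ the operators $b(k), b^*(k)$ on a Hilbert space satisfy $b^*(k)b(k) \leq CN\mathbb{H}_0$ and $b(k)b^*(k) \leq CN(\mathbb{H}_0 + \hbar)$ for a nonnegative operator $\mathbb{H}_0$. Then for every $k$, $-CN(\mathbb{H}_0 + \hbar) \leq b^*(k)b^*(-k) + b(-k)b(k) \leq CN(\mathbb{H}_0 + \hbar)$. Consequently, if $\hat{V} \geq 0$ with $\|\hat{V}\|_{\ell^1} < \infty$, then the bosonizable interaction $Q_B = \frac{1}{N}\sum_k \hat{V}(k)\big(b^*(k)b(k) + \frac{1}{2}(b^*(k)b^*(-k) + b(-k)b(k))\big)$ satisfies $-C'(\mathbb{H}_0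 + \hbar) \leq Q_B \leq C'(\mathbb{H}_0 + \hbar)$. -/
open scoped ComplexInnerProductSpace

/-- from `b*(k)b(k) ≤ CN H₀` and `b(k)b*(k) ≤ CN(H₀+ℏ)` one gets bounds on
`b*(k)b*(-k) + b(-k)b(k)` and on the bosonizable interaction `Q_B` (as quadratic forms). -/
theorem stmt7 {H : Type*} [NormedAddCommGroup H] [InnerProductSpace ℂ H] [CompleteSpace H]
    (N hbar C : ℝ) (hN : 0 < N) (hhbar : 0 < hbar) (hC : 0 < C)
    (b : (Fin 3 → ℤ) → H →L[ℂ] H) (H0 : H →L[ℂ] H)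
    (hH0 : ∀ ψ : H, 0 ≤ (⟪ψ, H0 ψ⟫).re)
    (hb1 : ∀ (k : Fin 3 → ℤ) (ψ : H), ‖b k ψ‖^2 ≤ C * N * (⟪ψ, H0 ψ⟫).re)
    (hb2 : ∀ (k : Fin 3 → ℤ) (ψ : H),
      ‖(ContinuousLinearMap.adjoint (b k)) ψ‖^2
        ≤ C * N * ((⟪ψ, H0 ψ⟫).re + hbar * ‖ψ‖^2))
    (hatV : (Fin 3 → ℤ) → ℝ) (hVpos : ∀ k, 0 ≤ hatV k) (hVsum : Summable hatV) :
    (∃ C₁ > 0, ∀ (k : Fin 3 → ℤ) (ψ : H),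
        |2 * (⟪b k ψ, (ContinuousLinearMap.adjoint (b (-k))) ψ⟫).re|
          ≤ C₁ * N * ((⟪ψ, H0 ψ⟫).re + hbar * ‖ψ‖^2)) ∧
    ∃ C' > 0, ∀ ψ : H,
      |(1/N) * ∑' k : Fin 3 → ℤ, hatV k *
          (‖b k ψ‖^2 + (⟪b k ψ, (ContinuousLinearMap.adjoint (b (-k))) ψ⟫).re)|
        ≤ C' * ((⟪ψ, H0 ψ⟫).re + hbar * ‖ψ‖^2) := by
  set E : H → ℝ := fun ψ => (⟪ψ, H0 ψ⟫).re + hbar * ‖ψ‖^2 with hE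
  have hEnn : ∀ ψ : H, 0 ≤ E ψ := fun ψ => by
    have := hH0 ψ
    have : (0:ℝ) ≤ hbar * ‖ψ‖^2 := by positivity
    simp only [hE]; nlinarith [hH0 ψ]
  have h1 : ∀ (k : Fin 3 → ℤ) (ψ : H), ‖b k ψ‖^2 ≤ C * N * E ψ := by
    intro k ψ
    have := hb1 k ψ
    have h2' : (0:ℝ) ≤ hbar * ‖ψ‖^2 := by positivity
    have hCN : (0:ℝ) ≤ C * N := by positivity
    simp only [hE]; nlinarith
  have h2 : ∀ (k : Fin 3 → ℤ) (ψ : H),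
      ‖(ContinuousLinearMap.adjoint (b k)) ψ‖^2 ≤ C * N * E ψ := fun k ψ => hb2 k ψ
  have key : ∀ (k : Fin 3 → ℤ) (ψ : H),
      |(⟪b k ψ, (ContinuousLinearMap.adjoint (b (-k))) ψ⟫).re| ≤ C * N * E ψ := by
    intro k ψ
    set u := b k ψ
    set v := (ContinuousLinearMap.adjoint (b (-k))) ψ
    have h3 : |(⟪u, v⟫).re| ≤ ‖u‖ * ‖v‖ := by
      calc |(⟪u, v⟫).re| ≤ ‖(⟪u, v⟫ : ℂ)‖ := Complex.abs_re_le_norm _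
        _ ≤ ‖u‖ * ‖v‖ := norm_inner_le_norm u v
    have hu := h1 k ψ
    have hv := h2 (-k) ψ
    nlinarith [sq_nonneg (‖u‖ - ‖v‖), norm_nonneg u, norm_nonneg v]
  constructor
  · refine ⟨2 * C, by positivity, fun k ψ => ?_⟩
    have hk := key k ψ
    simp only [hE] at hk
    rw [abs_mul, abs_two]
    linarith
  · set S := ∑' k, hatV k with hS
    have hSnn : 0 ≤ S := tsum_nonneg hVpos
    refine ⟨2 * C * (S + 1), by positivity, fun ψ => ?_⟩
    set f : (Fin 3 → ℤ) → ℝ := fun k =>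
      hatV k * (‖b k ψ‖^2 + (⟪b k ψ, (ContinuousLinearMap.adjoint (b (-k))) ψ⟫).re) with hf
    have hbound : ∀ k, ‖f k‖ ≤ hatV k * (2 * C * N * E ψ) := by
      intro k
      have h1' := h1 k ψ
      have hk := key k ψ
      have hVk := hVpos k
      rw [Real.norm_eq_abs, hf]
      simp only
      rw [abs_mul, abs_of_nonneg hVk]
      have : |‖b k ψ‖^2 + (⟪b k ψ, (ContinuousLinearMap.adjoint (b (-k))) ψ⟫).re|
          ≤ 2 * C * N * E ψ := by
        rw [abs_le]
        constructor <;> nlinarith [sq_nonneg ‖b k ψ‖, abs_le.mp hk]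
      nlinarith
    have hgsum : Summable (fun k => hatV k * (2 * C * N * E ψ)) := hVsum.mul_right _
    have hfsum : Summable f := Summable.of_norm_bounded hgsum hbound
    have habs : |∑' k, f k| ≤ ∑' k, hatV k * (2 * C * N * E ψ) := by
      calc |∑' k, f k| ≤ ∑' k, ‖f k‖ := by
            rw [← Real.norm_eq_abs]; exact norm_tsum_le_tsum_norm (hfsum.abs)
        _ ≤ ∑' k, hatV k * (2 * C * N * E ψ) :=
            Summable.tsum_le_tsum hbound hfsum.abs hgsum
    rw [tsum_mul_right, ← hS] at habs
    rw [abs_mul]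
    have hN' : |1/N| = 1/N := abs_of_pos (by positivity)
    rw [hN']
    have hEψ := hEnn ψ
    calc 1/N * |∑' k, f k| ≤ 1/N * (S * (2 * C * N * E ψ)) := by
          apply mul_le_mul_of_nonneg_left habs (by positivity)
      _ = 2 * C * S * E ψ := by field_simp
      _ ≤ 2 * C * (S + 1) * E ψ := by nlinarith
end

section
/- Let $J$ be a symmetric matrix with $0 \leq J \leq 1 - c$ for some $0 < c \leq 1$. Then $\frac{1}{\sqrt{1-J}} - 1 = \frac{1}{\pi}\int_0^\infty \frac{ds}{\sqrt{s}}\,\frac{1}{s+1-J}\, J\, \frac{1}{s+1}$, and there exists $C$ depending only on $c$ such that $\big\|(1-J)^{-1/2} - 1\big\|_{\mathrm{HS}} \leq C \|J\|_{\mathrm{HS}}$. Similarly, for a symmetric matrix $W \geq 0$, $\big\|(1+W)^{-1/2} - 1\big\|_{\mathrm{HS}} \leq C\|W\|_{\mathrm{HS}}$ with an absolute constant $C$. -/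
open Matrix MeasureTheory

/-- Hilbert–Schmidt (Frobenius) norm of a real square matrix. -/
noncomputable def hsNorm {n : Type*} [Fintype n] (M : Matrix n n ℝ) : ℝ :=
  Real.sqrt (∑ i, ∑ j, (M i j)^2)

section helpers
open Set Real Filter Topology


lemma sqrt_tendsto_atTop : Tendsto Real.sqrt atTop atTop := by
  apply tendsto_atTop_atTop.2
  intro b
  refine ⟨b^2, fun x hx => ?_⟩
  calc b ≤ |b| := le_abs_self b
  _ = Real.sqrt (b^2) := (Real.sqrt_sq_eq_abs b).symm
  _ ≤ Real.sqrt x := Real.sqrt_le_sqrt hx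

lemma keyInt (a : ℝ) (ha : 0 < a) :
    IntegrableOn (fun s => (Real.sqrt s)⁻¹ * (s+a)⁻¹) (Set.Ioi 0) ∧
    ∫ s in Set.Ioi 0, (Real.sqrt s)⁻¹ * (s+a)⁻¹ = Real.pi / Real.sqrt a := by
  have hsa : 0 < Real.sqrt a := Real.sqrt_pos.mpr ha
  set F : ℝ → ℝ := fun s => (2 / Real.sqrt a) * Real.arctan (Real.sqrt s / Real.sqrt a) with hF
  have hcont : ContinuousWithinAt F (Ici 0) 0 := by
    apply Continuous.continuousWithinAt
    exact continuous_const.mul (Real.continuous_arctan.comp (Real.continuous_sqrt.div_const _))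
  have hderiv : ∀ s ∈ Ioi (0:ℝ), HasDerivAt F ((Real.sqrt s)⁻¹ * (s+a)⁻¹) s := by
    intro s hs
    have hs0 : (0:ℝ) < s := hs
    have hss : 0 < Real.sqrt s := Real.sqrt_pos.mpr hs0
    have h1 : HasDerivAt Real.sqrt (1 / (2 * Real.sqrt s)) s := Real.hasDerivAt_sqrt hs0.ne'
    have h2 : HasDerivAt (fun x => Real.sqrt x / Real.sqrt a) (1 / (2 * Real.sqrt s) / Real.sqrt a) s :=
      h1.div_const _
    have h3 := (Real.hasDerivAt_arctan (Real.sqrt s / Real.sqrt a)).comp s h2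
    have h4 := h3.const_mul (2 / Real.sqrt a)
    refine h4.congr_deriv ?_
    have hsq : Real.sqrt s ^ 2 = s := Real.sq_sqrt hs0.le
    have haq : Real.sqrt a ^ 2 = a := Real.sq_sqrt ha.le
    have haa : Real.sqrt a * Real.sqrt a = a := Real.mul_self_sqrt ha.le
    have hss2 : Real.sqrt s * Real.sqrt s = s := Real.mul_self_sqrt hs0.le
    field_simp
    linear_combination -haq - hsq
  have hnonneg : ∀ s ∈ Ioi (0:ℝ), 0 ≤ (Real.sqrt s)⁻¹ * (s+a)⁻¹ := by
    intro s hs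
    have : (0:ℝ) < s := hs
    positivity
  have htend : Tendsto F atTop (𝓝 (Real.pi / Real.sqrt a)) := by
    have h1 : Tendsto (fun s => Real.sqrt s / Real.sqrt a) atTop atTop :=
      sqrt_tendsto_atTop.atTop_div_const hsa
    have h2 : Tendsto (fun s => Real.arctan (Real.sqrt s / Real.sqrt a)) atTop (𝓝 (π/2)) :=
      (tendsto_nhds_of_tendsto_nhdsWithin Real.tendsto_arctan_atTop).comp h1
    have h3 := h2.const_mul (2 / Real.sqrt a)
    convert h3 using 2
    field_simp
  refine ⟨integrableOn_Ioi_deriv_of_nonneg hcont hderiv hnonneg htend, ?_⟩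
  rw [integral_Ioi_of_hasDerivAt_of_nonneg hcont hderiv hnonneg htend]
  simp [hF, Real.sqrt_zero]

set_option linter.unusedSectionVars false

variable {n : Type} [Fintype n] [DecidableEq n]

/-- conjugation of a diagonal matrix -/
noncomputable def cj (U : Matrix n n ℝ) (d : n → ℝ) : Matrix n n ℝ :=
  U * Matrix.diagonal d * Uᵀ

lemma conjT_eq_t (U : Matrix n n ℝ) : Uᴴ = Uᵀ := by
  ext i j; simp

lemma cj_mul {U : Matrix n n ℝ} (hU1 : Uᵀ * U = 1) (d e : n → ℝ) :
    cj U d * cj U e = cj U (d * e) := by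
  simp only [cj, Matrix.mul_assoc]
  rw [← Matrix.mul_assoc Uᵀ U, hU1, Matrix.one_mul, ← Matrix.mul_assoc (Matrix.diagonal d),
    Matrix.diagonal_mul_diagonal]
  rfl

lemma cj_one {U : Matrix n n ℝ} (hU2 : U * Uᵀ = 1) : cj U 1 = 1 := by
  have h : Matrix.diagonal (1 : n → ℝ) = 1 := Matrix.diagonal_one
  rw [cj, h, Matrix.mul_one, hU2]

lemma cj_sub (U : Matrix n n ℝ) (d e : n → ℝ) : cj U (d - e) = cj U d - cj U e := by
  have h : Matrix.diagonal (d - e) = Matrix.diagonal d - Matrix.diagonal e := by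
    ext i j; by_cases hij : i = j <;> simp [Matrix.diagonal_apply, hij]
  rw [cj, cj, cj, h, Matrix.mul_sub, Matrix.sub_mul]

lemma cj_add (U : Matrix n n ℝ) (d e : n → ℝ) : cj U (d + e) = cj U d + cj U e := by
  have h : Matrix.diagonal (d + e) = Matrix.diagonal d + Matrix.diagonal e := by
    ext i j; by_cases hij : i = j <;> simp [Matrix.diagonal_apply, hij]
  rw [cj, cj, cj, h, Matrix.mul_add, Matrix.add_mul]

lemma cj_smul (U : Matrix n n ℝ) (s : ℝ) (d : n → ℝ) : cj U (s • d) = s • cj U d := by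
  simp [cj, Matrix.diagonal_smul, Matrix.mul_smul, Matrix.smul_mul]

lemma cj_apply (U : Matrix n n ℝ) (d : n → ℝ) (i j : n) :
    cj U d i j = ∑ k, U i k * d k * U j k := by
  show (U * Matrix.diagonal d * Uᵀ) i j = _
  rw [Matrix.mul_apply]
  simp [Matrix.mul_diagonal, Matrix.transpose_apply]

lemma cj_transpose (U : Matrix n n ℝ) (d : n → ℝ) : (cj U d)ᵀ = cj U d := by
  simp [cj, Matrix.transpose_mul, Matrix.mul_assoc]

lemma cj_posSemidef (U : Matrix n n ℝ) (d : n → ℝ) (hd : ∀ k, 0 ≤ d k) :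
    (cj U d).PosSemidef := by
  have h : (Matrix.diagonal d).PosSemidef := Matrix.PosSemidef.diagonal hd
  simpa [cj, conjT_eq_t] using h.mul_mul_conjTranspose_same U

lemma cj_entry_nonneg {U : Matrix n n ℝ} (hU1 : Uᵀ * U = 1) {d : n → ℝ}
    (h : (cj U d).PosSemidef) (k : n) : 0 ≤ d k := by
  have h2 := h.dotProduct_mulVec_nonneg (U *ᵥ Pi.single k 1)
  have e1 : cj U d *ᵥ (U *ᵥ Pi.single k 1) = (U * Matrix.diagonal d) *ᵥ Pi.single k 1 := by
    rw [Matrix.mulVec_mulVec, cj, Matrix.mul_assoc (U * Matrix.diagonal d), hU1, Matrix.mul_one]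
  have e2 : star (U *ᵥ Pi.single k 1) ⬝ᵥ ((U * Matrix.diagonal d) *ᵥ Pi.single k 1)
      = d k * ((Uᵀ * U) k k) := by
    simp only [Matrix.mulVec_single_one, Matrix.col_apply, dotProduct, Matrix.mul_diagonal, Pi.star_apply,
      star_trivial, Matrix.mul_apply, Matrix.transpose_apply, mul_one]
    rw [Finset.mul_sum]
    refine Finset.sum_congr rfl (fun i _ => ?_)
    have h3 : ∑ x, U i x * Matrix.diagonal d x k = U i k * d k := by
      rw [Finset.sum_eq_single k (fun b _ hb => by rw [Matrix.diagonal_apply_ne d hb, mul_zero])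
        (by simp)]
      rw [Matrix.diagonal_apply_eq]
    rw [h3]; ring
  rw [e1, e2, hU1] at h2
  simpa using h2

lemma cj_inv {U : Matrix n n ℝ} (hU1 : Uᵀ * U = 1) (hU2 : U * Uᵀ = 1) {d : n → ℝ}
    (hd : ∀ k, d k ≠ 0) : (cj U d)⁻¹ = cj U (fun k => (d k)⁻¹) := by
  apply Matrix.inv_eq_right_inv
  rw [cj_mul hU1]
  have : (d * fun k => (d k)⁻¹) = 1 := by
    funext k; simp [Pi.mul_apply, mul_inv_cancel₀ (hd k)]
  rw [this, cj_one hU2]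

lemma cj_sumsq {U : Matrix n n ℝ} (hU1 : Uᵀ * U = 1) (d : n → ℝ) :
    ∑ i, ∑ j, (cj U d i j)^2 = ∑ k, (d k)^2 := by
  have h1 : ∑ i, ∑ j, (cj U d i j)^2 = Matrix.trace ((cj U d)ᵀ * cj U d) := by
    rw [Matrix.trace]
    rw [Finset.sum_comm]
    refine Finset.sum_congr rfl (fun i _ => ?_)
    simp [Matrix.diag, Matrix.mul_apply, Matrix.transpose_apply, pow_two]
  rw [h1, cj_transpose, cj_mul hU1]
  show Matrix.trace (U * Matrix.diagonal (d*d) * Uᵀ) = _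
  rw [Matrix.trace_mul_cycle, hU1, Matrix.one_mul, Matrix.trace_diagonal]
  exact Finset.sum_congr rfl (fun k _ => (pow_two (d k)).symm)

lemma cj_sqrt {U : Matrix n n ℝ} (hU1 : Uᵀ * U = 1) (hU2 : U * Uᵀ = 1) {d : n → ℝ}
    (hd : ∀ k, 0 < d k) {B : Matrix n n ℝ} (hB : B.PosSemidef)
    (hBB : B * B = (cj U d)⁻¹) : B = cj U (fun k => (Real.sqrt (d k))⁻¹) := by
  have hP : (cj U (fun k => (Real.sqrt (d k))⁻¹)).PosSemidef :=
    cj_posSemidef U _ (fun k => by positivity)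
  open scoped MatrixOrder in
  apply (CFC.sq_eq_sq_iff (A := Matrix n n ℝ) B _ hB.nonneg hP.nonneg).mp
  rw [pow_two, pow_two, hBB, cj_mul hU1, cj_inv hU1 hU2 (fun k => (hd k).ne')]
  have hde : (fun k => (d k)⁻¹) = ((fun k => (Real.sqrt (d k))⁻¹) * fun k => (Real.sqrt (d k))⁻¹) := by
    funext k
    show (d k)⁻¹ = (Real.sqrt (d k))⁻¹ * (Real.sqrt (d k))⁻¹
    rw [← mul_inv, Real.mul_self_sqrt (hd k).le]
  rw [hde]
lemma spectral (A : Matrix n n ℝ) (hA : A.IsHermitian) :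
    ∃ (U : Matrix n n ℝ) (d : n → ℝ), Uᵀ * U = 1 ∧ U * Uᵀ = 1 ∧ A = cj U d := by
  refine ⟨(Matrix.IsHermitian.eigenvectorUnitary hA : Matrix n n ℝ), hA.eigenvalues, ?_, ?_, ?_⟩
  · have h := (Matrix.mem_unitaryGroup_iff').mp (Matrix.IsHermitian.eigenvectorUnitary hA).2
    rwa [Matrix.star_eq_conjTranspose, conjT_eq_t] at h
  · have h := (Matrix.mem_unitaryGroup_iff).mp (Matrix.IsHermitian.eigenvectorUnitary hA).2
    rwa [Matrix.star_eq_conjTranspose, conjT_eq_t] at h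
  · have h := Matrix.IsHermitian.spectral_theorem hA
    rwa [Unitary.conjStarAlgAut_apply, Matrix.star_eq_conjTranspose, conjT_eq_t, RCLike.ofReal_real_eq_id,
      Function.id_comp] at h

open Set Real Filter Topology in
lemma termInt (a : ℝ) (ha : 0 < a) :
    IntegrableOn (fun s => (Real.sqrt s)⁻¹ * ((1-a) * ((s+a)⁻¹ * (s+1)⁻¹))) (Set.Ioi 0) ∧
    ∫ s in Set.Ioi 0, (Real.sqrt s)⁻¹ * ((1-a) * ((s+a)⁻¹ * (s+1)⁻¹))
      = Real.pi / Real.sqrt a - Real.pi := by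
  have h1 := keyInt a ha
  have h2 := keyInt 1 one_pos
  have heq : ∀ s ∈ Set.Ioi (0:ℝ),
      (Real.sqrt s)⁻¹ * ((1-a) * ((s+a)⁻¹ * (s+1)⁻¹))
        = (Real.sqrt s)⁻¹ * (s+a)⁻¹ - (Real.sqrt s)⁻¹ * (s+1)⁻¹ := by
    intro s hs
    have hs0 : (0:ℝ) < s := hs
    have hsa : s + a ≠ 0 := by positivity
    have hs1 : s + (1:ℝ) ≠ 0 := by positivity
    field_simp
    ring
  have hint : IntegrableOn (fun s => (Real.sqrt s)⁻¹ * (s+a)⁻¹ - (Real.sqrt s)⁻¹ * (s+1)⁻¹)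
      (Set.Ioi 0) := h1.1.sub h2.1
  constructor
  · exact (integrableOn_congr_fun heq measurableSet_Ioi).mpr hint
  · rw [MeasureTheory.setIntegral_congr_fun measurableSet_Ioi heq,
      MeasureTheory.integral_sub h1.1 h2.1, h1.2, h2.2]
    simp

lemma f_bounds (c lam : ℝ) (hc0 : 0 < c) (h0 : 0 ≤ lam) (h1 : lam ≤ 1 - c) :
    0 ≤ (Real.sqrt (1-lam))⁻¹ - 1 ∧ (Real.sqrt (1-lam))⁻¹ - 1 ≤ lam / Real.sqrt c := by
  have hc : 0 < Real.sqrt c := Real.sqrt_pos.mpr hc0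
  set t := Real.sqrt (1 - lam) with ht
  have ht2 : t * t = 1 - lam := Real.mul_self_sqrt (by linarith)
  have htc : Real.sqrt c ≤ t := Real.sqrt_le_sqrt (by linarith)
  have ht0 : 0 < t := lt_of_lt_of_le hc htc
  have ht1 : t ≤ 1 := by nlinarith
  have hinv : 1 ≤ t⁻¹ := by
    rw [le_inv_comm₀ one_pos ht0]
    simpa using ht1
  refine ⟨by linarith, ?_⟩
  have key : t⁻¹ - 1 = (1 - t) / t := by field_simp
  rw [key]
  exact div_le_div₀ h0 (by nlinarith) hc htc

lemma g_bounds (mu : ℝ) (h0 : 0 ≤ mu) :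
    ((Real.sqrt (1+mu))⁻¹ - 1)^2 ≤ mu^2 := by
  set t := Real.sqrt (1 + mu) with ht
  have ht2 : t * t = 1 + mu := Real.mul_self_sqrt (by linarith)
  have ht1 : 1 ≤ t := by nlinarith [Real.sqrt_nonneg (1+mu)]
  have ht0 : 0 < t := lt_of_lt_of_le one_pos ht1
  have hinv1 : t⁻¹ ≤ 1 := by
    rw [inv_le_one_iff₀]; right; exact ht1
  have hinv0 : 0 < t⁻¹ := by positivity
  apply sq_le_sq'
  · -- -mu ≤ t⁻¹ - 1
    have h3 : 1 - t⁻¹ ≤ mu := by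
      have : 1 - t⁻¹ ≤ t - 1 := by
        have h4 : t * t⁻¹ = 1 := mul_inv_cancel₀ ht0.ne'
        nlinarith
      nlinarith
    linarith
  · linarith

lemma hsNorm_cj {U : Matrix n n ℝ} (hU1 : Uᵀ * U = 1) (d : n → ℝ) :
    hsNorm (cj U d) = Real.sqrt (∑ k, (d k)^2) := by
  rw [hsNorm, cj_sumsq hU1]
end helpers

/-- integral representation and Hilbert–Schmidt bounds for
`(1-J)^{-1/2} - 1` and `(1+W)^{-1/2} - 1`. -/
theorem stmt15 (c : ℝ) (hc0 : 0 < c) (hc1 : c ≤ 1) :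
    (∃ C > 0, ∀ (n : Type) [Fintype n] [DecidableEq n],
      ∀ J S : Matrix n n ℝ, J.PosSemidef →
        (((1 - c) • (1 : Matrix n n ℝ)) - J).PosSemidef →
        S.PosSemidef → S * S = ((1 : Matrix n n ℝ) - J)⁻¹ →
        (∀ i j, (S - 1) i j
          = (1/Real.pi) * ∫ s in Set.Ioi (0:ℝ), (Real.sqrt s)⁻¹ *
              ((((s • (1 : Matrix n n ℝ) + ((1 : Matrix n n ℝ) - J))⁻¹ * J) i j)
                * (s+1)⁻¹))
        ∧ hsNorm (S - 1) ≤ C * hsNorm J)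
    ∧ ∃ C' > 0, ∀ (n : Type) [Fintype n] [DecidableEq n],
        ∀ W T : Matrix n n ℝ, W.PosSemidef →
          T.PosSemidef → T * T = ((1 : Matrix n n ℝ) + W)⁻¹ →
          hsNorm (T - 1) ≤ C' * hsNorm W := by
  constructor
  · refine ⟨(Real.sqrt c)⁻¹, by positivity, ?_⟩
    intro n _ _ J S hJ hJc hS hSS
    obtain ⟨U, lam, hU1, hU2, hJcj⟩ := spectral J hJ.1
    have hlam0 : ∀ k, 0 ≤ lam k := fun k => cj_entry_nonneg hU1 (hJcj ▸ hJ) k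
    have hlam1 : ∀ k, lam k ≤ 1 - c := by
      intro k
      have hrep : ((1-c) • (1:Matrix n n ℝ)) - J = cj U (fun k => (1-c) - lam k) := by
        have hfun : ((1-c) • (1:n → ℝ) - lam) = fun k => (1-c) - lam k := by
          funext k
          simp
        rw [hJcj, ← cj_one hU2, ← cj_smul, ← cj_sub, hfun]
      have := cj_entry_nonneg hU1 (hrep ▸ hJc) k
      linarith
    have hpos : ∀ k, 0 < 1 - lam k := fun k => by have := hlam1 k; linarith
    have h1J : (1:Matrix n n ℝ) - J = cj U (fun k => 1 - lam k) := by
      rw [hJcj, ← cj_one hU2, ← cj_sub]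
      congr 1
    have hSeq : S = cj U (fun k => (Real.sqrt (1 - lam k))⁻¹) :=
      cj_sqrt hU1 hU2 hpos hS (by rw [hSS, h1J])
    have hS1 : S - 1 = cj U (fun k => (Real.sqrt (1 - lam k))⁻¹ - 1) := by
      rw [hSeq, ← cj_one hU2, ← cj_sub]
      congr 1
    constructor
    · intro i j
      have hinteq : ∀ s ∈ Set.Ioi (0:ℝ),
          (Real.sqrt s)⁻¹ * ((((s • (1 : Matrix n n ℝ) + ((1 : Matrix n n ℝ) - J))⁻¹ * J) i j)
              * (s+1)⁻¹)
          = ∑ k, (U i k * U j k) *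
              ((Real.sqrt s)⁻¹ * ((1 - (1 - lam k)) * ((s + (1-lam k))⁻¹ * (s+1)⁻¹))) := by
        intro s hs
        have hs0 : (0:ℝ) < s := hs
        have e1 : s • (1:Matrix n n ℝ) + ((1:Matrix n n ℝ) - J)
            = cj U (fun k => s + (1 - lam k)) := by
          rw [h1J]
          conv_lhs => rw [← cj_one hU2]
          have hfun : (s • (1:n → ℝ) + fun k => 1 - lam k) = fun k => s + (1 - lam k) := by
            funext k
            simp
          rw [← cj_smul, ← cj_add, hfun]
        have e2 : (cj U (fun k => s + (1 - lam k)))⁻¹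
            = cj U (fun k => (s + (1 - lam k))⁻¹) :=
          cj_inv hU1 hU2 (fun k => by have := hpos k; positivity)
        have e3 : (s • (1:Matrix n n ℝ) + ((1:Matrix n n ℝ) - J))⁻¹ * J
            = cj U (fun k => (s + (1 - lam k))⁻¹ * lam k) := by
          rw [e1, e2, hJcj, cj_mul hU1]
          congr 1
        rw [e3, cj_apply, Finset.sum_mul, Finset.mul_sum]
        refine Finset.sum_congr rfl (fun k _ => ?_)
        ring
      rw [MeasureTheory.setIntegral_congr_fun measurableSet_Ioi hinteq,
        MeasureTheory.integral_finset_sum _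
          (fun k _ => ((termInt (1 - lam k) (hpos k)).1.const_mul _))]
      have hval : ∀ k ∈ Finset.univ, (∫ s in Set.Ioi (0:ℝ), (U i k * U j k) *
            ((Real.sqrt s)⁻¹ * ((1 - (1 - lam k)) * ((s + (1-lam k))⁻¹ * (s+1)⁻¹))))
          = (U i k * U j k) * (Real.pi / Real.sqrt (1 - lam k) - Real.pi) := by
        intro k _
        rw [MeasureTheory.integral_const_mul, (termInt (1 - lam k) (hpos k)).2]
      rw [Finset.sum_congr rfl hval, hS1, cj_apply, Finset.mul_sum]
      refine Finset.sum_congr rfl (fun k _ => ?_)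
      have hpi : Real.pi ≠ 0 := Real.pi_ne_zero
      field_simp
    · -- HS bound
      have hfb : ∀ k, ((Real.sqrt (1 - lam k))⁻¹ - 1)^2 ≤ (lam k)^2 / c := by
        intro k
        obtain ⟨hnn, hub⟩ := f_bounds c (lam k) hc0 (hlam0 k) (hlam1 k)
        have h2 : ((Real.sqrt (1 - lam k))⁻¹ - 1)^2 ≤ (lam k / Real.sqrt c)^2 :=
          pow_le_pow_left₀ hnn hub 2
        calc ((Real.sqrt (1 - lam k))⁻¹ - 1)^2 ≤ (lam k / Real.sqrt c)^2 := h2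
        _ = (lam k)^2 / c := by rw [div_pow, Real.sq_sqrt hc0.le]
      rw [hS1, hsNorm_cj hU1, hJcj, hsNorm_cj hU1]
      calc Real.sqrt (∑ k, ((Real.sqrt (1 - lam k))⁻¹ - 1)^2)
          ≤ Real.sqrt (∑ k, (lam k)^2 / c) :=
            Real.sqrt_le_sqrt (Finset.sum_le_sum (fun k _ => hfb k))
        _ = Real.sqrt ((∑ k, (lam k)^2) / c) := by rw [Finset.sum_div]
        _ = Real.sqrt (∑ k, (lam k)^2) / Real.sqrt c := by
            rw [Real.sqrt_div (by positivity)]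
        _ = (Real.sqrt c)⁻¹ * Real.sqrt (∑ k, (lam k)^2) := by
            rw [div_eq_inv_mul]
  · refine ⟨1, one_pos, ?_⟩
    intro n _ _ W T hW hT hTT
    obtain ⟨U, mu, hU1, hU2, hWcj⟩ := spectral W hW.1
    have hmu0 : ∀ k, 0 ≤ mu k := fun k => cj_entry_nonneg hU1 (hWcj ▸ hW) k
    have hpos : ∀ k, 0 < 1 + mu k := fun k => by have := hmu0 k; linarith
    have h1W : (1:Matrix n n ℝ) + W = cj U (fun k => 1 + mu k) := by
      rw [hWcj, ← cj_one hU2, ← cj_add]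
      congr 1
    have hTeq : T = cj U (fun k => (Real.sqrt (1 + mu k))⁻¹) :=
      cj_sqrt hU1 hU2 hpos hT (by rw [hTT, h1W])
    have hT1 : T - 1 = cj U (fun k => (Real.sqrt (1 + mu k))⁻¹ - 1) := by
      rw [hTeq, ← cj_one hU2, ← cj_sub]
      congr 1
    rw [hT1, hsNorm_cj hU1, hWcj, hsNorm_cj hU1, one_mul]
    exact Real.sqrt_le_sqrt (Finset.sum_le_sum (fun k _ => g_bounds (mu k) (hmu0 k)))
end
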